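/- Let D be a probability distribution on ℝ^d × [0, 1] whose marginal on ℝ^d is N(0, I_d), let w* ∈ ℝ^d be a unit vector, let opt = E_{(x,y)∼D}[(ReLU(w*·x) − y)²], and let α > 0. Then P_{(x,y)∼D}[sign(y − α) ≠ sign(w*·x)] ≤ opt/α² + 2α. -/

import Mathlib

open MeasureTheory ProbabilityTheory Real

/-- `ReLU(a) = max(0, a)`. -/
noncomputable def relu (a : ℝ) : ℝ := max 0 a

/-- `sign(a) = 1` if `a ≥ 0` and `-1` otherwise. -/
noncomputable def sgn (a : ℝ) : ℝ := if 0 ≤ a then 1 else -1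

/-- The standard Gaussian measure `N(0, I_d)` on `ℝ^d`. -/
noncomputable def stdGaussianPi (d : ℕ) : Measure (Fin d → ℝ) :=
  Measure.pi fun _ => gaussianReal 0 1

lemma pdf_symm {c s : ℝ} (h : c^2 + s^2 = 1) (hs : s ≠ 0) (x u : ℝ) :
    gaussianPDFReal 0 1 x * gaussianPDFReal (c*x) (.mk (s^2) (sq_nonneg s)) u
      = gaussianPDFReal 0 1 u * gaussianPDFReal (c*u) (.mk (s^2) (sq_nonneg s)) x := by
  simp only [gaussianPDFReal, NNReal.coe_mk, NNReal.coe_one]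
  rw [mul_mul_mul_comm, mul_mul_mul_comm ((Real.sqrt (2*π*1))⁻¹) (Real.exp _), ← Real.exp_add,
    ← Real.exp_add]
  congr 2
  have hs2 : s^2 ≠ 0 := pow_ne_zero 2 hs
  field_simp
  ring_nf
  linear_combination (u^2 - x^2) * h

lemma pdf_meas2 (c : ℝ) (s' : NNReal) :
    Measurable (fun q : ℝ × ℝ => gaussianPDF (c * q.1) s' q.2) := by
  apply Measurable.ennreal_ofReal
  simp only [gaussianPDFReal]
  fun_prop

lemma gaussRotation {c s : ℝ} (h : c^2 + s^2 = 1) :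
    ((gaussianReal 0 1).prod (gaussianReal 0 1)).map (fun p : ℝ × ℝ => c * p.1 + s * p.2)
      = gaussianReal 0 1 := by
  by_cases hs : s = 0
  · subst hs
    have hc : c ^ 2 = 1 := by simpa using h
    have hfun : (fun p : ℝ × ℝ => c * p.1 + 0 * p.2) = (fun z => c * z) ∘ Prod.fst := by
      funext p; simp
    rw [hfun, ← Measure.map_map (measurable_const_mul c) measurable_fst,
      Measure.map_fst_prod, measure_univ, one_smul, gaussianReal_map_const_mul]
    have h1 : (.mk (c ^ 2) (sq_nonneg c) : NNReal) * 1 = 1 := by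
      rw [mul_one]; exact NNReal.coe_injective (by simpa using hc)
    rw [h1, mul_zero]
  set s' : NNReal := .mk (s^2) (sq_nonneg s) with hs'def
  have hs' : s' ≠ 0 := by
    intro hh
    exact pow_ne_zero 2 hs (by simpa [hs'def] using congrArg NNReal.toReal hh)
  have hTmeas : Measurable (fun p : ℝ × ℝ => c * p.1 + s * p.2) :=
    (measurable_fst.const_mul c).add (measurable_snd.const_mul s)
  ext A hA
  rw [Measure.map_apply hTmeas hA, Measure.prod_apply (hTmeas hA)]
  have hslice : ∀ x : ℝ, gaussianReal 0 1 (Prod.mk x ⁻¹' ((fun p : ℝ × ℝ => c * p.1 + s * p.2) ⁻¹' A))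
      = ∫⁻ u in A, gaussianPDF (c * x) s' u := by
    intro x
    have h1 : (gaussianReal 0 1).map (fun y => c * x + s * y) = gaussianReal (c * x) s' := by
      have h2 : (gaussianReal 0 1).map (fun y : ℝ => s * y) = gaussianReal 0 s' := by
        rw [gaussianReal_map_const_mul]
        norm_num [hs'def]
      have hcomp : (fun y : ℝ => c * x + s * y) = (fun z => c * x + z) ∘ (fun y => s * y) := rfl
      rw [hcomp, ← Measure.map_map (measurable_const_add _) (measurable_const_mul s), h2,
        gaussianReal_map_const_add]
      norm_num
    rw [← gaussianReal_apply _ hs' A, ← h1,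
      Measure.map_apply ((measurable_const_mul s).const_add (c*x)) hA]
    rfl
  simp_rw [hslice]
  -- now LHS = ∫⁻ x, (∫⁻ u in A, gaussianPDF (c*x) s' u) ∂(gaussianReal 0 1)
  rw [gaussianReal_of_var_ne_zero 0 one_ne_zero]
  have hFmeas : Measurable fun x : ℝ => ∫⁻ u in A, gaussianPDF (c * x) s' u :=
    (Measurable.lintegral_prod_right' ((pdf_meas2 c s'))).comp measurable_id |>.comp measurable_id
  rw [lintegral_withDensity_eq_lintegral_mul volume (measurable_gaussianPDF 0 1) hFmeas]
  have hpull : ∀ x : ℝ, ((gaussianPDF 0 1) * fun x => ∫⁻ u in A, gaussianPDF (c * x) s' u) x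
      = ∫⁻ u in A, gaussianPDF 0 1 x * gaussianPDF (c * x) s' u := by
    intro x
    simp only [Pi.mul_apply]
    rw [← lintegral_const_mul _ (measurable_gaussianPDF _ _)]
  simp_rw [hpull]
  rw [lintegral_lintegral_swap
    (((measurable_gaussianPDF 0 1).comp measurable_fst).mul (pdf_meas2 c s')).aemeasurable]
  have key : ∀ u : ℝ, ∫⁻ x, gaussianPDF 0 1 x * gaussianPDF (c * x) s' u = gaussianPDF 0 1 u := by
    intro u
    have hptw : ∀ x : ℝ, gaussianPDF 0 1 x * gaussianPDF (c * x) s' u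
        = gaussianPDF 0 1 u * gaussianPDF (c * u) s' x := by
      intro x
      simp only [gaussianPDF]
      rw [← ENNReal.ofReal_mul (gaussianPDFReal_nonneg _ _ _), pdf_symm h hs,
        ENNReal.ofReal_mul (gaussianPDFReal_nonneg _ _ _)]
    simp_rw [hptw]
    rw [lintegral_const_mul _ (measurable_gaussianPDF _ _),
      lintegral_gaussianPDF_eq_one _ hs', mul_one]
  simp_rw [key]
  rw [withDensity_apply _ hA]

lemma map_dot_gauss : ∀ (n : ℕ) (w : Fin n → ℝ), (∑ i, w i ^ 2) = 1 →
    (stdGaussianPi n).map (fun x => ∑ i, w i * x i) = gaussianReal 0 1 := by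
  intro n
  induction n with
  | zero => intro w hw; simp at hw
  | succ n ih =>
    intro w hw
    haveI hPn : IsProbabilityMeasure (stdGaussianPi n) := by
      unfold stdGaussianPi; infer_instance
    have mp := measurePreserving_piFinSuccAbove (fun _ : Fin (n+1) => gaussianReal 0 1) 0
    set e := MeasurableEquiv.piFinSuccAbove (fun _ : Fin (n+1) => ℝ) 0 with he
    set g : ℝ × (Fin n → ℝ) → ℝ := fun p => w 0 * p.1 + ∑ j : Fin n, w j.succ * p.2 j with hg
    have hgmeas : Measurable g :=
      (measurable_fst.const_mul _).add
        (Finset.measurable_sum _ fun j _ => ((measurable_pi_apply j).comp measurable_snd).const_mul _)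
    have hcomp : (fun x : Fin (n+1) → ℝ => ∑ i, w i * x i) = g ∘ e := by
      funext x
      simp only [Function.comp_apply, he, MeasurableEquiv.piFinSuccAbove_apply, hg]
      rw [Fin.sum_univ_succ]
      rfl
    rw [hcomp, ← Measure.map_map hgmeas e.measurable]
    rw [show Measure.map e (stdGaussianPi (n+1)) = (gaussianReal 0 1).prod (stdGaussianPi n)
      from mp.map_eq]
    have hct : w 0 ^ 2 + ∑ j : Fin n, w j.succ ^ 2 = 1 := by
      rw [← Fin.sum_univ_succ (fun i => w i ^ 2)]; exact hw
    by_cases ht : (∑ j : Fin n, w j.succ ^ 2) = 0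
    · -- all tail weights vanish
      have hz : ∀ j : Fin n, w j.succ = 0 := by
        intro j
        have := (Finset.sum_eq_zero_iff_of_nonneg
          (fun i _ => sq_nonneg (w i.succ))).mp ht j (Finset.mem_univ j)
        exact pow_eq_zero_iff (n := 2) (by norm_num) |>.mp this
      have hgfun : g = (fun z => w 0 * z) ∘ Prod.fst := by
        funext p; simp [hg, hz]
      have hc : w 0 ^ 2 = 1 := by rw [ht] at hct; linarith
      rw [hgfun, ← Measure.map_map (measurable_const_mul _) measurable_fst,
        Measure.map_fst_prod]
      rw [measure_univ, one_smul, gaussianReal_map_const_mul]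
      have h1 : (.mk (w 0 ^ 2) (sq_nonneg _) : NNReal) * 1 = 1 := by
        rw [mul_one]; exact NNReal.coe_injective (by simpa using hc)
      rw [h1, mul_zero]
    · have htpos : 0 < ∑ j : Fin n, w j.succ ^ 2 :=
        (Finset.sum_nonneg fun i _ => sq_nonneg _).lt_of_ne' ht
      set r := Real.sqrt (∑ j : Fin n, w j.succ ^ 2) with hrdef
      have hr : 0 < r := Real.sqrt_pos.mpr htpos
      have hr2 : r ^ 2 = ∑ j : Fin n, w j.succ ^ 2 := Real.sq_sqrt htpos.le
      set u : Fin n → ℝ := fun j => w j.succ / r with hu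
      have hu1 : ∑ j, u j ^ 2 = 1 := by
        simp only [hu, div_pow, ← Finset.sum_div, hr2]
        exact div_self ht
      have hmapS : (stdGaussianPi n).map (fun x => ∑ j, u j * x j) = gaussianReal 0 1 := ih u hu1
      have hSmeas : Measurable (fun x : Fin n → ℝ => ∑ j, u j * x j) :=
        Finset.measurable_sum _ fun j _ => (measurable_pi_apply j).const_mul _
      have hgfun : g = (fun q : ℝ × ℝ => w 0 * q.1 + r * q.2)
          ∘ Prod.map (id : ℝ → ℝ) (fun x => ∑ j, u j * x j) := by
        funext p
        show w 0 * p.1 + ∑ j : Fin n, w j.succ * p.2 j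
            = w 0 * p.1 + r * ∑ j : Fin n, u j * p.2 j
        rw [Finset.mul_sum]
        congr 1
        refine Finset.sum_congr rfl fun j _ => ?_
        simp only [hu]
        rw [← mul_assoc, mul_comm r, div_mul_cancel₀ _ hr.ne']
      rw [hgfun, ← Measure.map_map (show Measurable (fun q : ℝ × ℝ => w 0 * q.1 + r * q.2) from (measurable_fst.const_mul _).add
        (measurable_snd.const_mul _)) (measurable_id.prodMap hSmeas),
        ← Measure.map_prod_map _ _ measurable_id hSmeas, Measure.map_id, hmapS]
      exact gaussRotation (by rw [hr2]; exact hct)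

lemma gaussianPDFReal_le_one (x : ℝ) : gaussianPDFReal 0 1 x ≤ 1 := by
  rw [gaussianPDFReal]
  have h1 : (Real.sqrt (2 * π * (1:NNReal)))⁻¹ ≤ 1 := by
    rw [inv_le_one_iff₀]
    right
    rw [show ((2:ℝ) * π * (1:NNReal)) = 2*π by norm_num]
    exact Real.one_le_sqrt.mpr (by nlinarith [Real.pi_gt_three])
  have h2 : Real.exp (-(x - 0)^2 / (2 * (1:NNReal))) ≤ 1 := by
    rw [Real.exp_le_one_iff]
    have : (0:ℝ) ≤ (x - 0)^2 := sq_nonneg _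
    have h3 : ((2:ℝ) * (1:NNReal)) = 2 := by norm_num
    rw [h3]
    nlinarith
  nlinarith [gaussianPDFReal_nonneg 0 1 x, Real.exp_pos (-(x - 0)^2 / (2 * (1:NNReal)))]

lemma gauss_strip {α : ℝ} (hα : 0 < α) :
    gaussianReal 0 1 (Set.Ico 0 (2*α)) ≤ ENNReal.ofReal (2*α) := by
  rw [gaussianReal_apply 0 one_ne_zero]
  calc ∫⁻ x in Set.Ico 0 (2*α), gaussianPDF 0 1 x
      ≤ ∫⁻ _ in Set.Ico 0 (2*α), 1 := by
        refine setLIntegral_mono measurable_const fun x _ => ?_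
        rw [gaussianPDF]
        exact ENNReal.ofReal_le_of_le_toReal (by simpa using gaussianPDFReal_le_one x)
    _ = volume (Set.Ico 0 (2*α)) := setLIntegral_one _
    _ = ENNReal.ofReal (2*α) := by rw [Real.volume_Ico, sub_zero]

lemma sq_integrable_gauss : Integrable (fun x : ℝ => x^2) (gaussianReal 0 1) := by
  rw [gaussianReal_of_var_ne_zero 0 one_ne_zero,
    integrable_withDensity_iff (measurable_gaussianPDF 0 1)
      (ae_of_all _ fun x => ENNReal.ofReal_lt_top)]
  have hb : Integrable (fun x : ℝ => 4 * Real.exp (-(4⁻¹) * x^2)) volume :=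
    (integrable_exp_neg_mul_sq (by norm_num)).const_mul 4
  refine hb.mono' ?_ (ae_of_all _ fun x => ?_)
  · apply Measurable.aestronglyMeasurable
    apply Measurable.mul (by fun_prop)
    apply ENNReal.measurable_toReal.comp (measurable_gaussianPDF 0 1)
  · rw [gaussianPDF, ENNReal.toReal_ofReal (gaussianPDFReal_nonneg _ _ _)]
    rw [Real.norm_eq_abs, abs_of_nonneg (mul_nonneg (sq_nonneg x) (gaussianPDFReal_nonneg _ _ _))]
    rw [gaussianPDFReal]
    have h1 : (Real.sqrt (2 * π * (1:NNReal)))⁻¹ ≤ 1 := by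
      rw [inv_le_one_iff₀]
      right
      rw [show ((2:ℝ) * π * (1:NNReal)) = 2*π by norm_num]
      exact Real.one_le_sqrt.mpr (by nlinarith [Real.pi_gt_three])
    have hsqrtpos : 0 < (Real.sqrt (2 * π * (1:NNReal)))⁻¹ := by
      rw [inv_pos]
      apply Real.sqrt_pos.mpr
      have : (0:ℝ) < π := Real.pi_pos
      positivity
    have hexp : (-(x - 0)^2 / (2 * (1:NNReal))) = -(x^2/2) := by
      push_cast; ring
    rw [hexp]
    have key : x^2 * Real.exp (-(x^2/2)) ≤ 4 * Real.exp (-(4⁻¹) * x^2) := by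
      have h2 : x^2 ≤ 4 * Real.exp (x^2/4) := by
        have := Real.add_one_le_exp (x^2/4)
        nlinarith
      have h3 : Real.exp (-(x^2/2)) = Real.exp (-(4⁻¹) * x^2) * Real.exp (-(x^2/4)) := by
        rw [← Real.exp_add]; ring_nf
      have h4 : Real.exp (x^2/4) * Real.exp (-(x^2/4)) = 1 := by
        rw [← Real.exp_add]; simp
      calc x^2 * Real.exp (-(x^2/2)) ≤ (4 * Real.exp (x^2/4)) * Real.exp (-(x^2/2)) := by
            have := Real.exp_pos (-(x^2/2)); nlinarith
        _ = 4 * Real.exp (-(4⁻¹) * x^2) := by rw [h3]; nlinarith [h4, Real.exp_pos (-(4⁻¹)*x^2)]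
    calc x^2 * ((Real.sqrt (2 * π * (1:NNReal)))⁻¹ * Real.exp (-(x^2/2)))
        ≤ x^2 * (1 * Real.exp (-(x^2/2))) := by
          refine mul_le_mul_of_nonneg_left ?_ (sq_nonneg x)
          exact mul_le_mul_of_nonneg_right h1 (Real.exp_pos _).le
      _ = x^2 * Real.exp (-(x^2/2)) := by ring
      _ ≤ 4 * Real.exp (-(4⁻¹) * x^2) := key

/-- Thresholding step: for a distribution `D` on `ℝ^d × [0,1]` with Gaussian marginal,
a unit vector `w*`, `opt = E[(ReLU(w*·x) − y)²]`, and `α > 0`: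
`P[sign(y − α) ≠ sign(w*·x)] ≤ opt/α² + 2α`. -/
theorem stmt14 (d : ℕ) (D : Measure ((Fin d → ℝ) × ℝ)) [IsProbabilityMeasure D]
    (hmarg : D.map Prod.fst = stdGaussianPi d)
    (hy : ∀ᵐ p : (Fin d → ℝ) × ℝ ∂D, p.2 ∈ Set.Icc (0 : ℝ) 1)
    (wstar : Fin d → ℝ) (hwstar : ∑ i, (wstar i) ^ 2 = 1)
    (opt : ℝ) (hopt : opt = ∫ p : (Fin d → ℝ) × ℝ,
        (relu (∑ i, wstar i * p.1 i) - p.2) ^ 2 ∂D)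
    (α : ℝ) (hα : 0 < α) :
    (D {p : (Fin d → ℝ) × ℝ | sgn (p.2 - α) ≠ sgn (∑ i, wstar i * p.1 i)}).toReal
      ≤ opt / α ^ 2 + 2 * α := by
  set z : (Fin d → ℝ) × ℝ → ℝ := fun p => ∑ i, wstar i * p.1 i with hz
  have hzmeas : Measurable z :=
    Finset.measurable_sum _ fun i _ => ((measurable_pi_apply i).comp measurable_fst).const_mul _
  have hmapz : D.map z = gaussianReal 0 1 := by
    have h0 : z = (fun x : Fin d → ℝ => ∑ i, wstar i * x i) ∘ Prod.fst := rfl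
    rw [h0, ← Measure.map_map
      (Finset.measurable_sum _ fun i _ => (measurable_pi_apply i).const_mul _) measurable_fst,
      hmarg, map_dot_gauss d wstar hwstar]
  set f : (Fin d → ℝ) × ℝ → ℝ := fun p => (relu (z p) - p.2)^2 with hf
  have hrelu : Measurable relu := continuous_const.max continuous_id |>.measurable
  have hfmeas : Measurable f := ((hrelu.comp hzmeas).sub measurable_snd).pow_const 2
  have hfnn : ∀ p, 0 ≤ f p := fun p => sq_nonneg _
  have hint_z2 : Integrable (fun p => (z p)^2) D := by
    have h1 := sq_integrable_gauss
    rw [← hmapz] at h1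
    exact (integrable_map_measure (measurable_id.pow_const 2).aestronglyMeasurable
      hzmeas.aemeasurable).mp h1
  have hint_f : Integrable f D := by
    refine Integrable.mono' ((hint_z2.const_mul 2).add (integrable_const 2))
      hfmeas.aestronglyMeasurable ?_
    filter_upwards [hy] with p hp
    rw [Real.norm_eq_abs, abs_of_nonneg (hfnn p)]
    have h1 : relu (z p) ^ 2 ≤ (z p)^2 := by
      rcases le_or_gt (z p) 0 with h | h
      · rw [relu, max_eq_left h]; nlinarith
      · rw [relu, max_eq_right h.le]
    have h2 : p.2^2 ≤ 1 := by nlinarith [hp.1, hp.2]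
    have h3 : (0:ℝ) ≤ relu (z p) := le_max_left 0 _
    simp only [hf, Pi.add_apply]
    nlinarith [sq_nonneg (relu (z p) + p.2)]
  have hopt0 : 0 ≤ opt := hopt ▸ integral_nonneg (fun p => sq_nonneg _)
  set A := {p : (Fin d → ℝ) × ℝ | α^2 ≤ f p} with hA
  set C := {p : (Fin d → ℝ) × ℝ | 0 ≤ z p ∧ z p < 2*α} with hC
  have hDA : D A ≤ ENNReal.ofReal (opt / α^2) := by
    have hm := mul_meas_ge_le_lintegral₀ (μ := D)
        (f := fun p => ENNReal.ofReal (f p)) hfmeas.ennreal_ofReal.aemeasurable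
        (ENNReal.ofReal (α^2))
    have hset : {p | ENNReal.ofReal (α^2) ≤ ENNReal.ofReal (f p)} = A := by
      ext p
      simp [hA, ENNReal.ofReal_le_ofReal_iff (hfnn p)]
    rw [hset] at hm
    have hlint : ∫⁻ p, ENNReal.ofReal (f p) ∂D = ENNReal.ofReal opt := by
      rw [hopt, ← ofReal_integral_eq_lintegral_ofReal hint_f (ae_of_all _ hfnn)]
    rw [hlint] at hm
    rw [ENNReal.ofReal_div_of_pos (by positivity),
      ENNReal.le_div_iff_mul_le (Or.inl (by simp [ENNReal.ofReal_eq_zero]; positivity))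
        (Or.inl ENNReal.ofReal_ne_top)]
    calc D A * ENNReal.ofReal (α^2) = ENNReal.ofReal (α^2) * D A := mul_comm _ _
      _ ≤ ENNReal.ofReal opt := hm
  have hDC : D C ≤ ENNReal.ofReal (2*α) := by
    have h0 : C = z ⁻¹' (Set.Ico 0 (2*α)) := by ext p; simp [hC, Set.mem_Ico]
    rw [h0, ← Measure.map_apply hzmeas measurableSet_Ico, hmapz]
    exact gauss_strip hα
  have hsub : ∀ᵐ p : (Fin d → ℝ) × ℝ ∂D,
      p ∈ {p : (Fin d → ℝ) × ℝ | sgn (p.2 - α) ≠ sgn (z p)} → p ∈ A ∪ C := by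
    filter_upwards [hy] with p hp hpE
    by_cases hyα : 0 ≤ p.2 - α
    · have hzneg : ¬ (0 ≤ z p) := by
        intro h0; exact hpE (by simp [sgn, hyα, h0])
      push_neg at hzneg
      refine Or.inl ?_
      show α^2 ≤ f p
      have hre : relu (z p) = 0 := max_eq_left hzneg.le
      simp only [hf, hre]
      have : α ≤ p.2 := by linarith
      nlinarith
    · have hz0 : 0 ≤ z p := by
        by_contra h0
        exact hpE (by simp [sgn, hyα, h0])
      by_cases hz2 : z p < 2*α
      · exact Or.inr ⟨hz0, hz2⟩
      · refine Or.inl ?_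
        push_neg at hz2
        show α^2 ≤ f p
        have hre : relu (z p) = z p := max_eq_right hz0
        simp only [hf, hre]
        have hyl : p.2 < α := by linarith [not_le.mp hyα]
        nlinarith
  have hmain : D {p : (Fin d → ℝ) × ℝ | sgn (p.2 - α) ≠ sgn (z p)}
      ≤ ENNReal.ofReal (opt/α^2 + 2*α) := by
    calc D {p : (Fin d → ℝ) × ℝ | sgn (p.2 - α) ≠ sgn (z p)}
        ≤ D (A ∪ C) := measure_mono_ae hsub
      _ ≤ D A + D C := measure_union_le _ _
      _ ≤ ENNReal.ofReal (opt/α^2) + ENNReal.ofReal (2*α) := add_le_add hDA hDC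
      _ = ENNReal.ofReal (opt/α^2 + 2*α) := (ENNReal.ofReal_add
          (div_nonneg hopt0 (sq_nonneg α)) (by positivity)).symm
  exact ENNReal.toReal_le_of_le_ofReal
    (add_nonneg (div_nonneg hopt0 (sq_nonneg α)) (by positivity)) hmain
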